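/- Let q0, q1, q2 ∈ ℝ[u] have degree at most m ≥ 1, define F(x1,x2) = B_m(q1 − x1·q0, q2 − x2·q0) and p(x1,x2) = det F(x1,x2). If the Bézout matrix B_m(q1,q2) = F(0,0) is positive semidefinite, then p satisfies the real zero condition at the origin: for every z ∈ ℝ² such that the univariate polynomial t ↦ p(t·z) is not the zero polynomial, every complex root of t ↦ p(t·z) is real. -/

import Mathlib

/-- The Bézout matrix `B_m(g,h)` of two univariate polynomials of degree at most `m`:
the `m × m` symmetric matrix `(b_{kl})` determined by
`g(u)h(v) − g(v)h(u) = (u − v) ∑_{k,l=0}^{m−1} b_{kl} u^k v^l`. Working in `R[v][u]`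
(outer variable `u`, inner variable `v`), `u − v` is the monic polynomial `X − C X`, and
`b_{kl}` is the coefficient of `u^k v^l` of the exact quotient. -/
noncomputable def bezoutMatrix (R : Type*) [CommRing R] (m : ℕ) (g h : Polynomial R) :
    Matrix (Fin m) (Fin m) R :=
  Matrix.of fun k l : Fin m =>
    (((g.map (Polynomial.C : R →+* Polynomial R) * Polynomial.C h -
        Polynomial.C g * h.map (Polynomial.C : R →+* Polynomial R)) /ₘ
      (Polynomial.X - Polynomial.C Polynomial.X)).coeff (k : ℕ)).coeff (l : ℕ)

open Polynomial
open scoped ComplexOrder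

variable {R S : Type*} [CommRing R] [CommRing S]

/-- The Bézout numerator. -/
noncomputable def bezNum (g h : R[X]) : (R[X])[X] :=
  g.map (C : R →+* R[X]) * C h - C g * h.map (C : R →+* R[X])

lemma bezDen_monic : (X - C X : (R[X])[X]).Monic := monic_X_sub_C _

lemma bezNum_dvd (g h : R[X]) : (X - C X : (R[X])[X]) ∣ bezNum g h := by
  rw [dvd_iff_isRoot]
  simp [bezNum, IsRoot, eval_map, eval₂_C_X, mul_comm]

lemma bezNum_eq (g h : R[X]) :
    bezNum g h = (X - C X) * (bezNum g h /ₘ (X - C X)) := by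
  conv_lhs => rw [← modByMonic_add_div (bezNum g h) (X - C X)]
  rw [(modByMonic_eq_zero_iff_dvd bezDen_monic).2 (bezNum_dvd g h), zero_add]

lemma bezNum_map (φ : R →+* S) (g h : R[X]) :
    (bezNum g h).map (mapRingHom φ) = bezNum (g.map φ) (h.map φ) := by
  simp only [bezNum, Polynomial.map_sub, Polynomial.map_mul, map_C, map_map]
  rw [show (mapRingHom φ).comp (C : R →+* R[X]) = (C : S →+* S[X]).comp φ from
    RingHom.ext fun a => by simp]
  simp [coe_mapRingHom]

lemma bez_map (φ : R →+* S) (m : ℕ) (g h : R[X]) (k l : Fin m) :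
    bezoutMatrix S m (g.map φ) (h.map φ) k l = φ (bezoutMatrix R m g h k l) := by
  have hmap : (bezNum g h /ₘ (X - C X)).map (mapRingHom φ)
      = bezNum (g.map φ) (h.map φ) /ₘ (X - C X) := by
    rw [map_divByMonic _ bezDen_monic, bezNum_map]
    simp
  simp only [bezoutMatrix, Matrix.of_apply, ← bezNum.eq_def]
  rw [← hmap, coeff_map, coe_mapRingHom, coeff_map]

/-- The variable-swap ring homomorphism on `R[v][u]`. -/
noncomputable def bezSwap (R : Type*) [CommRing R] : (R[X])[X] →+* (R[X])[X] :=
  eval₂RingHom (mapRingHom (C : R →+* R[X])) (C X)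

lemma bezSwap_coeff (P : (R[X])[X]) (k l : ℕ) :
    ((bezSwap R P).coeff k).coeff l = (P.coeff l).coeff k := by
  induction P using Polynomial.induction_on' with
  | add p q hp hq => simp only [map_add, coeff_add, hp, hq]
  | monomial j q =>
    induction q using Polynomial.induction_on' with
    | add p q hp hq => simp only [map_add, coeff_add, hp, hq]
    | monomial i a =>
      simp only [bezSwap, coe_eval₂RingHom, eval₂_monomial, coe_mapRingHom, map_monomial,
        ← C_pow, coeff_mul_C, coeff_monomial]
      by_cases hik : k = i <;> by_cases hjl : l = j <;>
        simp [coeff_monomial, coeff_X_pow, hik, hjl, Ne.symm, eq_comm]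

lemma bezSwap_CmapC (g : R[X]) : bezSwap R (g.map (C : R →+* R[X])) = C g := by
  simp only [bezSwap, coe_eval₂RingHom, eval₂_map]
  rw [show (mapRingHom (C : R →+* R[X])).comp (C : R →+* R[X])
      = ((C : R[X] →+* (R[X])[X]).comp (C : R →+* R[X])) from RingHom.ext fun a => by simp]
  rw [← hom_eval₂ g C (C : R[X] →+* (R[X])[X]) X, eval₂_C_X]

lemma bezSwap_C (g : R[X]) : bezSwap R (C g) = g.map (C : R →+* R[X]) := by
  simp [bezSwap]

lemma bezSwap_num (g h : R[X]) : bezSwap R (bezNum g h) = - bezNum g h := by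
  simp only [bezNum, map_sub, map_mul, bezSwap_CmapC, bezSwap_C]
  ring

lemma bez_symm [IsDomain R] (m : ℕ) (g h : R[X]) (k l : Fin m) :
    bezoutMatrix R m g h k l = bezoutMatrix R m g h l k := by
  set Q := bezNum g h /ₘ (X - C X) with hQ
  have h1 : (X - C X) * Q = bezNum g h := (bezNum_eq g h).symm
  have h3 : bezSwap R (X - C X : (R[X])[X]) = -(X - C X) := by
    simp [bezSwap]
  have h4 : Q = bezSwap R Q := by
    apply mul_left_cancel₀ (bezDen_monic.ne_zero : (X - C X : (R[X])[X]) ≠ 0)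
    have h2 := congrArg (bezSwap R) h1
    rw [map_mul, h3, bezSwap_num, ← h1] at h2
    linear_combination h2
  show (Q.coeff (k : ℕ)).coeff (l : ℕ) = (Q.coeff (l : ℕ)).coeff (k : ℕ)
  conv_lhs => rw [h4]
  rw [bezSwap_coeff]

lemma bez_self (m : ℕ) (g : R[X]) (k l : Fin m) : bezoutMatrix R m g g k l = 0 := by
  simp only [bezoutMatrix, Matrix.of_apply]
  rw [show g.map (C : R →+* R[X]) * C g - C g * g.map (C : R →+* R[X]) = 0 by ring,
    zero_divByMonic]
  simp

lemma bez_expand {F : Type*} [CommRing F] [IsDomain F] (m : ℕ) (g0 g1 g2 : F[X]) (a b : F)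
    (k l : Fin m) :
    bezoutMatrix F m (g1 - C a * g0) (g2 - C b * g0) k l
      = bezoutMatrix F m g1 g2 k l - b * bezoutMatrix F m g1 g0 k l
        - a * bezoutMatrix F m g0 g2 k l + a * b * bezoutMatrix F m g0 g0 k l := by
  have hnum : bezNum (g1 - C a * g0) (g2 - C b * g0)
      = bezNum g1 g2 - C (C b) * bezNum g1 g0 - C (C a) * bezNum g0 g2
        + C (C a) * C (C b) * bezNum g0 g0 := by
    simp only [bezNum, Polynomial.map_sub, Polynomial.map_mul, map_C, map_sub, map_mul]
    ring
  have hQ : bezNum (g1 - C a * g0) (g2 - C b * g0) /ₘ (X - C X)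
      = bezNum g1 g2 /ₘ (X - C X) - C (C b) * (bezNum g1 g0 /ₘ (X - C X))
        - C (C a) * (bezNum g0 g2 /ₘ (X - C X))
        + C (C a) * C (C b) * (bezNum g0 g0 /ₘ (X - C X)) := by
    apply mul_left_cancel₀ (bezDen_monic.ne_zero : (X - C X : (F[X])[X]) ≠ 0)
    rw [← bezNum_eq, hnum]
    conv_lhs => rw [bezNum_eq g1 g2, bezNum_eq g1 g0, bezNum_eq g0 g2, bezNum_eq g0 g0]
    ring
  simp only [bezoutMatrix, Matrix.of_apply, ← bezNum.eq_def]
  rw [hQ]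
  simp [coeff_sub, coeff_add, coeff_C_mul, mul_assoc]

lemma mapeval_aux (t : ℝ) (q q' : ℝ[X]) (c : ℝ) :
    (q.map (C : ℝ →+* ℝ[X]) - C (C c * X) * q'.map (C : ℝ →+* ℝ[X])).map (evalRingHom t)
      = q - (t * c) • q' := by
  simp only [Polynomial.map_sub, Polynomial.map_mul, map_C, map_map]
  rw [show (evalRingHom t).comp (C : ℝ →+* ℝ[X]) = RingHom.id ℝ from
    RingHom.ext fun a => by simp]
  simp only [Polynomial.map_id]
  rw [show (evalRingHom t) (C c * X) = c * t by simp]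
  rw [smul_eq_C_mul, mul_comm t c]

lemma mapaeval_aux (w' : ℂ) (q q' : ℝ[X]) (c : ℝ) :
    (q.map (C : ℝ →+* ℝ[X]) - C (C c * X) * q'.map (C : ℝ →+* ℝ[X])).map
        (eval₂RingHom (algebraMap ℝ ℂ) w')
      = q.map (algebraMap ℝ ℂ) - C ((c : ℂ) * w') * q'.map (algebraMap ℝ ℂ) := by
  simp only [Polynomial.map_sub, Polynomial.map_mul, map_C, map_map]
  rw [show (eval₂RingHom (algebraMap ℝ ℂ) w').comp (C : ℝ →+* ℝ[X]) = algebraMap ℝ ℂ from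
    RingHom.ext fun a => by simp]
  simp only [map_mul, coe_eval₂RingHom, eval₂_C, eval₂_X, Complex.coe_algebraMap]

lemma key_eval (m : ℕ) (q0 q1 q2 : ℝ[X]) (z : Fin 2 → ℝ) (w' : ℂ) :
    eval₂ (algebraMap ℝ ℂ) w'
        ((bezoutMatrix (Polynomial ℝ) m
          (q1.map (C : ℝ →+* ℝ[X]) - C (C (z 0) * X) * q0.map (C : ℝ →+* ℝ[X]))
          (q2.map (C : ℝ →+* ℝ[X]) - C (C (z 1) * X) * q0.map (C : ℝ →+* ℝ[X]))).det)
      = ((bezoutMatrix ℝ m q1 q2).map (algebraMap ℝ ℂ) + w' •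
          ((-(z 0 • bezoutMatrix ℝ m q0 q2) - z 1 • bezoutMatrix ℝ m q1 q0).map
            (algebraMap ℝ ℂ))).det := by
  rw [show (eval₂ (algebraMap ℝ ℂ) w' : ℝ[X] → ℂ) = ⇑(eval₂RingHom (algebraMap ℝ ℂ) w') from
    (coe_eval₂RingHom _ _).symm]
  rw [RingHom.map_det]
  congr 1
  ext k l
  rw [RingHom.mapMatrix_apply, Matrix.map_apply, ← bez_map (eval₂RingHom (algebraMap ℝ ℂ) w') m _ _ k l,
    mapaeval_aux, mapaeval_aux,
    bez_expand m (q0.map (algebraMap ℝ ℂ)) (q1.map (algebraMap ℝ ℂ)) (q2.map (algebraMap ℝ ℂ))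
      ((z 0 : ℂ) * w') ((z 1 : ℂ) * w') k l,
    bez_self, bez_map (algebraMap ℝ ℂ), bez_map (algebraMap ℝ ℂ), bez_map (algebraMap ℝ ℂ)]
  simp only [Matrix.add_apply, Matrix.smul_apply, Matrix.map_apply, Matrix.sub_apply,
    Matrix.neg_apply, smul_eq_mul, map_sub, map_neg, map_mul, Complex.coe_algebraMap,
    Complex.ofReal_mul, Complex.ofReal_sub, Complex.ofReal_neg]
  ring

/-- Let `q0, q1, q2 ∈ ℝ[u]` of degree at most `m ≥ 1`, define
`F(x1,x2) = B_m(q1 − x1 q0, q2 − x2 q0)` and `p = det F`. If `B_m(q1,q2) = F(0,0)` is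
positive semidefinite, then `p` satisfies the real zero condition at the origin: for
every `z ∈ ℝ²` such that the univariate polynomial `t ↦ p (t z)` (obtained by the same
Bézoutian construction over `ℝ[t]`, with `x1 = z1 t`, `x2 = z2 t`) is not the zero
polynomial, every complex root of `t ↦ p (t z)` is real. -/
theorem stmt14 (m : ℕ) (hm : 1 ≤ m) (q0 q1 q2 : Polynomial ℝ)
    (hq0 : q0.degree ≤ m) (hq1 : q1.degree ≤ m) (hq2 : q2.degree ≤ m)
    (p : ℝ → ℝ → ℝ)
    (hp : ∀ x1 x2 : ℝ,
      p x1 x2 = (bezoutMatrix ℝ m (q1 - x1 • q0) (q2 - x2 • q0)).det)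
    (P : (Fin 2 → ℝ) → Polynomial ℝ)
    (hP : ∀ z : Fin 2 → ℝ,
      P z = (bezoutMatrix (Polynomial ℝ) m
        (q1.map (Polynomial.C : ℝ →+* Polynomial ℝ) -
          Polynomial.C (Polynomial.C (z 0) * Polynomial.X) *
            q0.map (Polynomial.C : ℝ →+* Polynomial ℝ))
        (q2.map (Polynomial.C : ℝ →+* Polynomial ℝ) -
          Polynomial.C (Polynomial.C (z 1) * Polynomial.X) *
            q0.map (Polynomial.C : ℝ →+* Polynomial ℝ))).det)
    (hpsd : (bezoutMatrix ℝ m q1 q2).PosSemidef) :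
    (∀ (z : Fin 2 → ℝ) (t : ℝ), (P z).eval t = p (t * z 0) (t * z 1)) ∧
    ∀ z : Fin 2 → ℝ, P z ≠ 0 →
      ∀ w : ℂ, ((P z).map (algebraMap ℝ ℂ)).IsRoot w → w.im = 0 := by
  constructor
  · -- Part A
    intro z t
    rw [hP z, hp (t * z 0) (t * z 1)]
    rw [show (Polynomial.eval t : ℝ[X] → ℝ) = ⇑(evalRingHom t) from rfl, RingHom.map_det,
      RingHom.mapMatrix_apply]
    congr 1
    ext k l
    rw [Matrix.map_apply, ← bez_map (evalRingHom t) m _ _ k l, mapeval_aux, mapeval_aux]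
  · -- Part B
    intro z hPz w hw
    by_contra him
    set τ := algebraMap ℝ ℂ with hτ
    set A : Matrix (Fin m) (Fin m) ℝ := bezoutMatrix ℝ m q1 q2 with hA
    set Bm : Matrix (Fin m) (Fin m) ℝ :=
      -(z 0 • bezoutMatrix ℝ m q0 q2) - z 1 • bezoutMatrix ℝ m q1 q0 with hBm
    have key : ∀ w' : ℂ, eval₂ τ w' (P z) = (A.map τ + w' • Bm.map τ).det := by
      intro w'
      rw [hP z]
      exact key_eval m q0 q1 q2 z w'
    -- the root gives a singular pencil value
    have hdet : (A.map τ + w • Bm.map τ).det = 0 := by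
      rw [← key w]
      have := hw
      rwa [IsRoot, eval_map] at this
    -- A.map τ is PSD
    have hAc : (A.map τ).PosSemidef := by
      obtain ⟨B0, hB0⟩ : ∃ B0 : Matrix (Fin m) (Fin m) ℝ, A = Matrix.conjTranspose B0 * B0 := by
        open scoped MatrixOrder Matrix.Norms.L2Operator in
        exact CStarAlgebra.nonneg_iff_eq_star_mul_self.mp hpsd.nonneg
      suffices h : A.map τ = Matrix.conjTranspose (B0.map τ) * B0.map τ from
        h ▸ Matrix.posSemidef_conjTranspose_mul_self _
      rw [hB0, Matrix.map_mul]
      congr 1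
      ext i j
      simp [Matrix.conjTranspose_apply, Matrix.map_apply, hτ, Complex.coe_algebraMap,
        Complex.conj_ofReal]
    -- entries of Bm.map τ : real symmetric
    have hBsym : ∀ k l, Bm k l = Bm l k := by
      intro k l
      simp only [hBm, Matrix.sub_apply, Matrix.neg_apply, Matrix.smul_apply, smul_eq_mul]
      rw [bez_symm m q0 q2 k l, bez_symm m q1 q0 k l]
    have hBherm : (Bm.map τ).IsHermitian := by
      unfold Matrix.IsHermitian
      ext i j
      simp only [Matrix.conjTranspose_apply, Matrix.map_apply, hτ, Complex.coe_algebraMap,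
        Complex.conj_ofReal, RCLike.star_def]
      rw [hBsym j i]
    obtain ⟨v, hv0, hvec⟩ := Matrix.exists_mulVec_eq_zero_iff.mpr hdet
    set c : ℂ := dotProduct (star v) ((A.map ⇑τ).mulVec v) with hc
    set e : ℂ := dotProduct (star v) ((Bm.map ⇑τ).mulVec v) with he
    have hce : c + w * e = 0 := by
      have h := congrArg (fun u => dotProduct (star v) u) hvec
      simpa [Matrix.add_mulVec, Matrix.smul_mulVec, dotProduct_add,
        dotProduct_smul, smul_eq_mul, ← hc, ← he] using h
    have hcge : (0 : ℂ) ≤ c := hAc.dotProduct_mulVec_nonneg v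
    have hcim : c.im = 0 := ((Complex.le_def.mp hcge).2).symm
    have heim : e.im = 0 := by
      have hstar : star e = e := by
        nth_rewrite 2 [he]
        rw [Matrix.star_dotProduct]
        congr 1
        rw [Matrix.star_mulVec, ← Matrix.dotProduct_mulVec, hBherm.eq, ← he]
      have h2 : -e.im = e.im := by
        simpa using congrArg Complex.im hstar
      linarith
    have hwe : w.im * e.re = 0 := by
      have h := congrArg Complex.im hce
      simpa [Complex.add_im, Complex.mul_im, hcim, heim] using h
    have here : e.re = 0 := by
      rcases mul_eq_zero.mp hwe with h | h
      · exact absurd h him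
      · exact h
    have he0 : e = 0 := Complex.ext here heim
    have hc0 : c = 0 := by
      have := hce
      rw [he0, mul_zero, add_zero] at this
      exact this
    have hAv : (A.map ⇑τ).mulVec v = 0 := (hAc.dotProduct_mulVec_zero_iff v).mp (by rw [← hc]; exact hc0)
    have hBv : (Bm.map ⇑τ).mulVec v = 0 := by
      have h := hvec
      rw [Matrix.add_mulVec, Matrix.smul_mulVec, hAv, zero_add] at h
      rcases smul_eq_zero.mp h with h | h
      · exact absurd (by rw [h]; simp : w.im = 0) him
      · exact h
    have hall : ∀ w' : ℂ, eval₂ τ w' (P z) = 0 := by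
      intro w'
      rw [key w']
      refine Matrix.exists_mulVec_eq_zero_iff.mp ⟨v, hv0, ?_⟩
      rw [Matrix.add_mulVec, Matrix.smul_mulVec, hAv, hBv, smul_zero, add_zero]
    have hmap0 : (P z).map τ = 0 := by
      apply Polynomial.funext
      intro x
      rw [eval_map, hall x, eval_zero]
    exact hPz (Polynomial.map_injective τ τ.injective
      (by rw [hmap0, Polynomial.map_zero]))
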